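/- Let ξ₁,…,ξₙ be iid Laplace(0,b) random variables, b > 0. Then for all ε ≥ 0, P(|(1/n)∑ᵢ ξᵢ| ≥ ε) ≤ 2·max{exp(−nε²/(16b²)), exp(−nε/(2b))}. -/

import Mathlib

open MeasureTheory ProbabilityTheory
open scoped ENNReal

/-- The Laplace(0,b) distribution, with Lebesgue density `(1/(2b))·exp(−|x|/b)`. -/
noncomputable def laplaceMeasure (b : ℝ) : Measure ℝ :=
  volume.withDensity fun x => ENNReal.ofReal ((1 / (2 * b)) * Real.exp (-|x| / b))


open Real Set Filter

set_option linter.deprecated false in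
lemma aux_integral_exp_Ioi {c : ℝ} (hc : 0 < c) :
    ∫ x in Ioi (0:ℝ), Real.exp (-(c*x)) = 1/c := by
  have hderiv : ∀ x ∈ Ici (0:ℝ),
      HasDerivAt (fun y : ℝ => -Real.exp (-(c*y))/c) (Real.exp (-(c*x))) x := by
    intro x _
    have h1 : HasDerivAt (fun y : ℝ => -(c*y)) (-c) x := by
      simpa using ((hasDerivAt_id x).const_mul c).fun_neg
    have h2 := h1.exp
    convert (h2.fun_neg).div_const c using 1
    exacts [rfl, rfl, by field_simp]
  have hint : IntegrableOn (fun x => Real.exp (-(c*x))) (Ioi (0:ℝ)) := by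
    simpa [neg_mul] using exp_neg_integrableOn_Ioi 0 hc
  have htend : Tendsto (fun x : ℝ => -Real.exp (-(c*x))/c) atTop (nhds 0) := by
    have h0 : Tendsto (fun x : ℝ => c * x) atTop atTop :=
      Tendsto.const_mul_atTop hc tendsto_id
    have : Tendsto (fun x : ℝ => Real.exp (-(c*x))) atTop (nhds 0) := by
      exact Real.tendsto_exp_neg_atTop_nhds_zero.comp h0
    simpa using (this.neg).div_const c
  have := integral_Ioi_of_hasDerivAt_of_tendsto' hderiv hint htend
  rw [this]; field_simp; simp

set_option linter.deprecated false in
lemma laplace_density_mul {b t : ℝ} (hb : 0 < b) (ht : |t| * b < 1) :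
    Integrable (fun x => (1 / (2 * b)) * Real.exp (-|x| / b) * Real.exp (t*x)) volume ∧
    ∫ x, (1 / (2 * b)) * Real.exp (-|x| / b) * Real.exp (t*x) = 1/(1 - t^2*b^2) := by
  set h : ℝ → ℝ := fun x => (1 / (2 * b)) * Real.exp (-|x| / b) * Real.exp (t*x) with hh
  have htb : |t| < 1/b := by rw [lt_div_iff₀ hb]; exact ht
  have ht1 : t < 1/b := lt_of_le_of_lt (le_abs_self t) htb
  have ht2 : -(1/b) < t := by
    have := neg_abs_le t; linarith [neg_lt_neg htb]
  have hc1 : 0 < 1/b - t := by linarith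
  have hc2 : 0 < 1/b + t := by linarith
  -- on Ioi 0 : h x = (1/(2b)) exp (-((1/b - t) x))
  have heq1 : ∀ x ∈ Ioi (0:ℝ), h x = (1/(2*b)) * Real.exp (-((1/b - t)*x)) := by
    intro x hx
    have : |x| = x := abs_of_pos hx
    rw [hh]; simp only [this]
    rw [mul_assoc, ← Real.exp_add]
    congr 2
    field_simp; ring
  have heq2 : ∀ x ∈ Ioi (0:ℝ), h (-x) = (1/(2*b)) * Real.exp (-((1/b + t)*x)) := by
    intro x hx
    have : |(-x)| = x := by rw [abs_neg]; exact abs_of_pos hx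
    rw [hh]; simp only [this]
    rw [mul_assoc, ← Real.exp_add]
    congr 2
    field_simp; ring
  have hint1 : IntegrableOn h (Ioi 0) := by
    have h0 := exp_neg_integrableOn_Ioi 0 hc1
    simp only [neg_mul] at h0
    have h1 : IntegrableOn (fun x => (1/(2*b)) * Real.exp (-((1/b - t)*x))) (Ioi (0:ℝ)) :=
      h0.const_mul (1/(2*b))
    exact h1.congr_fun (fun x hx => (heq1 x hx).symm) measurableSet_Ioi
  have hintneg : IntegrableOn (fun x => h (-x)) (Ioi 0) := by
    have h0 := exp_neg_integrableOn_Ioi 0 hc2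
    simp only [neg_mul] at h0
    have h1 : IntegrableOn (fun x => (1/(2*b)) * Real.exp (-((1/b + t)*x))) (Ioi (0:ℝ)) :=
      h0.const_mul (1/(2*b))
    exact h1.congr_fun (fun x hx => (heq2 x hx).symm) measurableSet_Ioi
  have hint2 : IntegrableOn h (Iic 0) := by
    rw [← Measure.map_neg_eq_self (volume : Measure ℝ)]
    have m : MeasurableEmbedding fun x : ℝ => -x := (Homeomorph.neg ℝ).measurableEmbedding
    rw [m.integrableOn_map_iff]
    simp only [Function.comp_def, neg_preimage, neg_Iic, neg_zero]
    exact Iff.mpr integrableOn_Ici_iff_integrableOn_Ioi hintneg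
  have hval1 : ∫ x in Ioi (0:ℝ), h x = (1/(2*b)) * (1/(1/b - t)) := by
    rw [setIntegral_congr_fun measurableSet_Ioi heq1, integral_const_mul,
      aux_integral_exp_Ioi hc1]
  have hval2 : ∫ x in Iic (0:ℝ), h x = (1/(2*b)) * (1/(1/b + t)) := by
    have : ∫ x in Iic (0:ℝ), h x = ∫ x in Ioi (0:ℝ), h (-x) := by
      rw [← neg_zero, ← integral_comp_neg_Iic]; simp
    rw [this, setIntegral_congr_fun measurableSet_Ioi heq2, integral_const_mul,
      aux_integral_exp_Ioi hc2]
  have hint : Integrable h volume := by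
    rw [← integrableOn_univ, ← Iic_union_Ioi (a := (0:ℝ))]
    exact hint2.union hint1
  refine ⟨hint, ?_⟩
  have := intervalIntegral.integral_Iic_add_Ioi (b := (0:ℝ)) (f := h) hint2 hint1
  rw [← this, hval1, hval2]
  have hb2 : (b:ℝ) ≠ 0 := ne_of_gt hb
  have h1 : t^2*b^2 < 1 := by
    have h2 : (|t| * b)^2 < 1 := by nlinarith [mul_nonneg (abs_nonneg t) hb.le]
    calc t^2*b^2 = (|t| * b)^2 := by rw [mul_pow, sq_abs]
    _ < 1 := h2
  have hd : 1 - t^2*b^2 ≠ 0 := by linarith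
  have e1 : 1/b - t ≠ 0 := ne_of_gt hc1
  have e2 : 1/b + t ≠ 0 := ne_of_gt hc2
  have habs : |t * b| < 1 := by rw [abs_mul, abs_of_pos hb]; exact ht
  have p1 : t * b < 1 := (abs_lt.mp habs).2
  have p2 : -1 < t * b := (abs_lt.mp habs).1
  have q1 : 1 - t * b ≠ 0 := by linarith
  have q2 : 1 + t * b ≠ 0 := by linarith
  have f1 : 1/(1/b - t) = b/(1 - t*b) := by
    rw [show (1:ℝ)/b - t = (1 - t*b)/b by field_simp <;> ring, one_div_div]
  have f2 : 1/(1/b + t) = b/(1 + t*b) := by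
    rw [show (1:ℝ)/b + t = (1 + t*b)/b by field_simp <;> ring, one_div_div]
  rw [f1, f2]
  field_simp
  rw [mul_comm b t, show b ^ 2 * t ^ 2 = t^2*b^2 by ring]
  field_simp
  ring

lemma laplace_mgf {b t : ℝ} (hb : 0 < b) (ht : |t| * b < 1) :
    Integrable (fun x => Real.exp (t*x)) (laplaceMeasure b) ∧
    ∫ x, Real.exp (t*x) ∂(laplaceMeasure b) = 1/(1 - t^2*b^2) := by
  have hgm : Measurable fun x : ℝ => ((1 / (2 * b)) * Real.exp (-|x| / b)).toNNReal :=
    (((measurable_abs.neg.div_const b).exp).const_mul (1/(2*b))).real_toNNReal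
  have hrw : laplaceMeasure b
      = volume.withDensity (fun x => (((1 / (2 * b)) * Real.exp (-|x| / b)).toNNReal : ℝ≥0∞)) :=
    rfl
  have hfun : (fun x : ℝ => ((1 / (2 * b)) * Real.exp (-|x| / b)).toNNReal • Real.exp (t*x))
      = fun x => (1 / (2 * b)) * Real.exp (-|x| / b) * Real.exp (t*x) := by
    funext x
    rw [NNReal.smul_def, Real.coe_toNNReal _ (by positivity), smul_eq_mul]
  constructor
  · rw [hrw, integrable_withDensity_iff_integrable_smul hgm, hfun]
    exact (laplace_density_mul hb ht).1
  · rw [hrw, integral_withDensity_eq_integral_smul hgm, hfun]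
    exact (laplace_density_mul hb ht).2

lemma q_le_exp {q x : ℝ} (hq : 0 < q) (h : q - 1 ≤ x) : q ≤ Real.exp x :=
  calc q = Real.exp (Real.log q) := (Real.exp_log hq).symm
  _ ≤ Real.exp x := Real.exp_le_exp.mpr ((Real.log_le_sub_one_of_pos hq).trans (by linarith))

lemma chern_step {t b ε r : ℝ} (n : ℕ) (hD : 0 < 1 - t^2*b^2)
    (h : 1/(1 - t^2*b^2) ≤ Real.exp (t*ε - r)) :
    Real.exp (-t * (n*ε)) * (1/(1 - t^2*b^2))^n ≤ Real.exp (-(n*r)) := by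
  have h2 : (1/(1 - t^2*b^2))^n ≤ Real.exp (t*ε - r)^n :=
    pow_le_pow_left₀ (by positivity) h n
  have h3 : Real.exp (t*ε - r)^n = Real.exp (n*(t*ε - r)) := (Real.exp_nat_mul _ n).symm
  calc Real.exp (-t * (n*ε)) * (1/(1 - t^2*b^2))^n
      ≤ Real.exp (-t * (n*ε)) * Real.exp (n*(t*ε - r)) := by
        rw [← h3]; exact mul_le_mul_of_nonneg_left h2 (Real.exp_pos _).le
  _ = Real.exp (-t * (n*ε) + n*(t*ε - r)) := (Real.exp_add _ _).symm
  _ = Real.exp (-(n*r)) := by ring_nf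

lemma key_ineq {b ε : ℝ} (hb : 0 < b) (hε : 0 ≤ ε) (n : ℕ) :
    ∃ t : ℝ, 0 ≤ t ∧ |t| * b < 1 ∧
      Real.exp (-t * (n*ε)) * (1/(1 - t^2*b^2))^n ≤
        max (Real.exp (-(n*ε^2)/(16*b^2))) (Real.exp (-(n*ε)/(2*b))) := by
  rcases le_or_gt ε (4*b) with hcase | hcase
  · -- small ε : t = ε/(8 b²)
    refine ⟨ε/(8*b^2), by positivity, ?_, ?_⟩
    · rw [abs_of_nonneg (by positivity)]
      rw [div_mul_eq_mul_div, div_lt_one (by positivity)]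
      nlinarith
    · set t := ε/(8*b^2) with htdef
      have hA : t^2*b^2 = ε^2/(64*b^2) := by rw [htdef]; field_simp; ring
      have hA4 : t^2*b^2 ≤ 1/4 := by rw [hA]; rw [div_le_iff₀ (by positivity)]; nlinarith
      have hA0 : 0 ≤ t^2*b^2 := by positivity
      have hD : 0 < 1 - t^2*b^2 := by linarith
      have hper : 1/(1 - t^2*b^2) ≤ Real.exp (t*ε - ε^2/(16*b^2)) := by
        apply q_le_exp (by positivity)
        have e1 : 1/(1 - t^2*b^2) - 1 = (t^2*b^2)/(1 - t^2*b^2) := by field_simp; ring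
        rw [e1, div_le_iff₀ hD]
        have e2 : t*ε = ε^2/(8*b^2) := by rw [htdef]; field_simp
        rw [e2, hA]
        have hX16 : ε^2/b^2 ≤ 16 := by rw [div_le_iff₀ (by positivity : (0:ℝ) < b^2)]; nlinarith
        have hX0 : (0:ℝ) ≤ ε^2/b^2 := by positivity
        have r1 : ε^2/(64*b^2) = (ε^2/b^2)/64 := by ring
        have r2 : ε^2/(8*b^2) = (ε^2/b^2)/8 := by ring
        have r3 : ε^2/(16*b^2) = (ε^2/b^2)/16 := by ring
        rw [r1, r2, r3]
        nlinarith [hX0, hX16]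
      have := chern_step n hD hper
      refine le_trans this (le_trans (le_of_eq ?_) (le_max_left _ _))
      congr 1; ring
  · -- large ε : t = 3/(5 b)
    refine ⟨3/(5*b), by positivity, ?_, ?_⟩
    · rw [abs_of_nonneg (by positivity)]
      rw [div_mul_eq_mul_div, div_lt_one (by positivity)]
      nlinarith
    · set t := 3/(5*b) with htdef
      have hA : t^2*b^2 = 9/25 := by rw [htdef]; field_simp; ring
      have hD : 0 < 1 - t^2*b^2 := by rw [hA]; norm_num
      have hq : 1/(1 - t^2*b^2) - 1 = 9/16 := by rw [hA]; norm_num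
      have htε : t*ε = 3*ε/(5*b) := by rw [htdef]; ring
      rcases le_or_gt ε (8*b) with hc2 | hc2
      · have hper : 1/(1 - t^2*b^2) ≤ Real.exp (t*ε - ε^2/(16*b^2)) := by
          apply q_le_exp (by positivity)
          rw [hq, htε]
          rw [div_sub_div _ _ (by positivity : (5:ℝ)*b ≠ 0) (by positivity : (16:ℝ)*b^2 ≠ 0),
            le_div_iff₀ (by positivity)]
          nlinarith [mul_nonneg (by linarith : (0:ℝ) ≤ ε - 4*b) (by linarith : (0:ℝ) ≤ 8*b - ε),
            mul_pos hb hb]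
        have := chern_step n hD hper
        refine le_trans this (le_trans (le_of_eq ?_) (le_max_left _ _))
        congr 1; ring
      · have hper : 1/(1 - t^2*b^2) ≤ Real.exp (t*ε - ε/(2*b)) := by
          apply q_le_exp (by positivity)
          rw [hq, htε]
          rw [div_sub_div _ _ (by positivity : (5:ℝ)*b ≠ 0) (by positivity : (2:ℝ)*b ≠ 0),
            le_div_iff₀ (by positivity)]
          nlinarith [mul_pos hb hb]
        have := chern_step n hD hper
        refine le_trans this (le_trans (le_of_eq ?_) (le_max_right _ _))
        congr 1; ring

/-- **Tail bound for Laplace averages.** If `ξ₁,…,ξₙ` are iid Laplace(0,b),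
`b > 0`, then for all `ε ≥ 0`,
`P(|(1/n)∑ᵢ ξᵢ| ≥ ε) ≤ 2·max{exp(−nε²/(16b²)), exp(−nε/(2b))}`. -/
theorem laplace_average_tail_bound
    {Ω : Type*} [MeasurableSpace Ω] (P : Measure Ω) [IsProbabilityMeasure P]
    (n : ℕ) (hn : 0 < n) (b : ℝ) (hb : 0 < b) (ξ : Fin n → Ω → ℝ)
    (hmeas : ∀ i, Measurable (ξ i))
    (hindep : iIndepFun ξ P)
    (hlaw : ∀ i, P.map (ξ i) = laplaceMeasure b)
    (ε : ℝ) (hε : 0 ≤ ε) :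
    P {ω | ε ≤ |(1 / (n : ℝ)) * ∑ i, ξ i ω|}
      ≤ ENNReal.ofReal (2 * max (Real.exp (-(n * ε ^ 2) / (16 * b ^ 2)))
          (Real.exp (-(n * ε) / (2 * b)))) := by
  
  classical
  obtain ⟨t, ht0, htb, hkey⟩ := key_ineq hb hε n
  set M : ℝ := max (Real.exp (-(n * ε ^ 2) / (16 * b ^ 2))) (Real.exp (-(n * ε) / (2 * b)))
    with hM
  have hM0 : 0 ≤ M := le_trans (Real.exp_pos _).le (le_max_left _ _)
  set S : Ω → ℝ := ∑ i, ξ i with hSdef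
  have hSapp : ∀ ω, S ω = ∑ i, ξ i ω := fun ω => by simp [hSdef]
  -- integrability and mgf of individual variables
  have hexpint : ∀ (u : ℝ), |u| * b < 1 → ∀ i, Integrable (fun ω => Real.exp (u * ξ i ω)) P := by
    intro u hu i
    have h1 := (laplace_mgf hb hu).1
    rw [← hlaw i] at h1
    have hgm : Measurable fun x : ℝ => Real.exp (u*x) := by fun_prop
    exact (integrable_map_measure hgm.aestronglyMeasurable (hmeas i).aemeasurable).mp h1
  have hmgf1 : ∀ (u : ℝ), |u| * b < 1 → ∀ i, mgf (ξ i) P u = 1/(1 - u^2*b^2) := by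
    intro u hu i
    have hgm : Measurable fun x : ℝ => Real.exp (u*x) := by fun_prop
    rw [mgf, ← integral_map (hmeas i).aemeasurable hgm.aestronglyMeasurable, hlaw i]
    exact (laplace_mgf hb hu).2
  have hmgfS : ∀ (u : ℝ), |u| * b < 1 → mgf S P u = (1/(1 - u^2*b^2))^n := by
    intro u hu
    rw [hSdef, hindep.mgf_sum hmeas Finset.univ]
    rw [Finset.prod_congr rfl (fun i _ => hmgf1 u hu i), Finset.prod_const,
      Finset.card_univ, Fintype.card_fin]
  -- upper tail
  have hSint : Integrable (fun ω => Real.exp (t * S ω)) P := by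
    have := hindep.integrable_exp_mul_sum hmeas (s := Finset.univ)
      (fun i _ => hexpint t htb i)
    simpa [hSdef] using this
  have hup : (P {ω | (n:ℝ)*ε ≤ S ω}).toReal ≤ M := by
    have hc := measure_ge_le_exp_mul_mgf (μ := P) (X := S) ((n:ℝ)*ε) ht0 hSint
    rw [hmgfS t htb] at hc
    exact hc.trans hkey
  -- lower tail
  have htb' : |(-t)| * b < 1 := by rwa [abs_neg]
  have hSint' : Integrable (fun ω => Real.exp ((-t) * S ω)) P := by
    have := hindep.integrable_exp_mul_sum hmeas (s := Finset.univ)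
      (fun i _ => hexpint (-t) htb' i)
    simpa [hSdef] using this
  have hdown : (P {ω | S ω ≤ -((n:ℝ)*ε)}).toReal ≤ M := by
    have hc := measure_le_le_exp_mul_mgf (μ := P) (X := S) (-((n:ℝ)*ε))
      (neg_nonpos.mpr ht0) hSint'
    rw [hmgfS (-t) htb'] at hc
    refine hc.trans ?_
    have : Real.exp (-(-t) * -((n:ℝ)*ε)) * (1/(1 - (-t)^2*b^2))^n
        = Real.exp (-t * ((n:ℝ)*ε)) * (1/(1 - t^2*b^2))^n := by
      rw [neg_neg, neg_pow]
      ring_nf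
    rw [this]
    exact hkey
  -- event decomposition
  have hn' : (0:ℝ) < n := Nat.cast_pos.mpr hn
  have hsub : {ω | ε ≤ |(1 / (n : ℝ)) * ∑ i, ξ i ω|}
      ⊆ {ω | (n:ℝ)*ε ≤ S ω} ∪ {ω | S ω ≤ -((n:ℝ)*ε)} := by
    intro ω hω
    simp only [Set.mem_setOf_eq, Set.mem_union] at hω ⊢
    have habs : |(1 / (n : ℝ)) * ∑ i, ξ i ω| = |S ω| / n := by
      rw [abs_mul, abs_of_pos (by positivity : (0:ℝ) < 1/(n:ℝ)), hSapp]
      ring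
    rw [habs, le_div_iff₀ hn'] at hω
    rcases le_abs.mp (by linarith : (n:ℝ)*ε ≤ |S ω|) with h | h
    · exact Or.inl h
    · exact Or.inr (by linarith)
  calc P {ω | ε ≤ |(1 / (n : ℝ)) * ∑ i, ξ i ω|}
      ≤ P ({ω | (n:ℝ)*ε ≤ S ω} ∪ {ω | S ω ≤ -((n:ℝ)*ε)}) := measure_mono hsub
  _ ≤ P {ω | (n:ℝ)*ε ≤ S ω} + P {ω | S ω ≤ -((n:ℝ)*ε)} := measure_union_le _ _
  _ ≤ ENNReal.ofReal M + ENNReal.ofReal M := by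
      refine add_le_add ?_ ?_
      · rw [← ENNReal.ofReal_toReal (measure_ne_top P _)]
        exact ENNReal.ofReal_le_ofReal hup
      · rw [← ENNReal.ofReal_toReal (measure_ne_top P _)]
        exact ENNReal.ofReal_le_ofReal hdown
  _ = ENNReal.ofReal (2 * M) := by
      rw [← ENNReal.ofReal_add hM0 hM0]; congr 1; ring
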